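/- Let C = X Xᵀ be the correlation matrix of zero-mean data X (a real symmetric positive semidefinite m×m matrix), let v₁, …, v_m be an orthonormal basis of ℝᵐ of eigenvectors of C with eigenvalues λ₁ ≥ λ₂ ≥ … ≥ λ_m ≥ 0, let 1 ≤ k < m with λ_i > 0 for all i ≤ k, and suppose additionally λ_{k+1} > λ_j for all j > k+1 and λ_{k+1} > 0. Define f_k(w) = ½ wᵀCw − Σ_{i=1}^{k} (wᵀ C v_i)² / (2 λ_i). Then the maximizers of f_k over the unit sphere {w : wᵀw = 1} are exactly w = v_{k+1} and w = −v_{k+1}. -/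

import Mathlib

open Matrix Finset

/-- in the setting of the Simple Hebbian PCA objective
`f_k(w) = ½ wᵀ C w − Σ_{i=1}^{k} (wᵀ C v_i)² / (2 λ_i)` with `C = X Xᵀ`, if moreover
`λ_{k+1} > 0` and `λ_{k+1} > λ_j` for all `j > k+1`, then the maximizers of `f_k` over
the unit sphere are exactly `v_{k+1}` and `−v_{k+1}`.
(With zero-based indexing, `v_{k+1}` and `λ_{k+1}` are `v ⟨k, _⟩` and `lam ⟨k, _⟩`.) -/
theorem simple_hebbian_pca_objective_unique_max {m N : ℕ} (X : Matrix (Fin m) (Fin N) ℝ)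
    (C : Matrix (Fin m) (Fin m) ℝ) (hCX : C = X * Xᵀ)
    (v : Fin m → Fin m → ℝ) (lam : Fin m → ℝ)
    (horth : ∀ i j : Fin m, v i ⬝ᵥ v j = if i = j then (1 : ℝ) else 0)
    (heig : ∀ i : Fin m, C.mulVec (v i) = lam i • v i)
    (hdec : ∀ i j : Fin m, i ≤ j → lam j ≤ lam i)
    (hnonneg : ∀ i : Fin m, 0 ≤ lam i)
    (k : ℕ) (hk : 1 ≤ k) (hkm : k < m)
    (hpos : ∀ i : Fin m, (i : ℕ) < k → 0 < lam i)
    (hgap : ∀ j : Fin m, k + 1 ≤ (j : ℕ) → lam j < lam ⟨k, hkm⟩)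
    (hposk : 0 < lam ⟨k, hkm⟩)
    (f : (Fin m → ℝ) → ℝ)
    (hf : ∀ w : Fin m → ℝ,
      f w = (1 / 2) * (w ⬝ᵥ C.mulVec w)
        - ∑ i ∈ univ.filter (fun i : Fin m => (i : ℕ) < k),
            (w ⬝ᵥ C.mulVec (v i)) ^ 2 / (2 * lam i)) :
    ∀ w : Fin m → ℝ, w ⬝ᵥ w = 1 →
      ((∀ u : Fin m → ℝ, u ⬝ᵥ u = 1 → f u ≤ f w) ↔
        (w = v ⟨k, hkm⟩ ∨ w = -v ⟨k, hkm⟩)) := by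
  intro w hw
  set kk : Fin m := ⟨k, hkm⟩ with hkkdef
  -- Completeness of the orthonormal system
  have hVV : ∀ x y : Fin m, ∑ i, v i x * v i y = if x = y then (1:ℝ) else 0 := by
    have h1 : (Matrix.of v) * (Matrix.of v)ᵀ = 1 := by
      ext i j
      simpa [Matrix.mul_apply, Matrix.one_apply, dotProduct] using horth i j
    have h2 : (Matrix.of v)ᵀ * (Matrix.of v) = 1 := mul_eq_one_comm.mp h1
    intro x y
    have h3 := congrFun (congrFun h2 x) y
    simpa [Matrix.mul_apply, Matrix.one_apply, mul_comm] using h3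
  have hdecomp : ∀ (u : Fin m → ℝ) (x : Fin m), ∑ j, (u ⬝ᵥ v j) * v j x = u x := by
    intro u x
    calc ∑ j, (u ⬝ᵥ v j) * v j x = ∑ j, ∑ y, u y * (v j y * v j x) := by
          simp [dotProduct, Finset.sum_mul, mul_assoc]
      _ = ∑ y, u y * ∑ j, v j y * v j x := by
          rw [Finset.sum_comm]; simp [Finset.mul_sum]
      _ = u x := by simp [hVV]
  have hu' : ∀ u : Fin m → ℝ, u = ∑ j, (u ⬝ᵥ v j) • v j := by
    intro u
    funext x
    rw [Finset.sum_apply]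
    simp only [Pi.smul_apply, smul_eq_mul]
    exact (hdecomp u x).symm
  have hCv : ∀ (u : Fin m → ℝ) (i : Fin m), u ⬝ᵥ C.mulVec (v i) = lam i * (u ⬝ᵥ v i) := by
    intro u i
    rw [heig i, dotProduct_smul, smul_eq_mul]
  have hdotsum : ∀ (u : Fin m → ℝ) (g : Fin m → Fin m → ℝ),
      u ⬝ᵥ (∑ j, g j) = ∑ j, u ⬝ᵥ g j := by
    intro u g
    calc u ⬝ᵥ (∑ j, g j) = ∑ x, ∑ j, u x * g j x := by
          simp [dotProduct, Finset.sum_apply, Finset.mul_sum]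
      _ = ∑ j, ∑ x, u x * g j x := Finset.sum_comm
      _ = ∑ j, u ⬝ᵥ g j := rfl
  have hCu : ∀ u : Fin m → ℝ, u ⬝ᵥ C.mulVec u = ∑ j, lam j * (u ⬝ᵥ v j) ^ 2 := by
    intro u
    have hmv : C.mulVec u = ∑ j, (u ⬝ᵥ v j) • (lam j • v j) := by
      conv_lhs => rw [hu' u]
      rw [show C.mulVec (∑ j, (u ⬝ᵥ v j) • v j)
          = C.mulVecLin (∑ j, (u ⬝ᵥ v j) • v j) from rfl, map_sum]
      refine Finset.sum_congr rfl fun j _ => ?_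
      rw [_root_.map_smul, Matrix.mulVecLin_apply, heig j]
    rw [hmv, hdotsum]
    refine Finset.sum_congr rfl fun j _ => ?_
    rw [dotProduct_smul, dotProduct_smul]
    simp [smul_eq_mul]; ring
  have huu : ∀ u : Fin m → ℝ, u ⬝ᵥ u = ∑ j, (u ⬝ᵥ v j) ^ 2 := by
    intro u
    calc u ⬝ᵥ u = ∑ x, u x * ∑ j, (u ⬝ᵥ v j) * v j x := by
          show ∑ x, u x * u x = _
          refine Finset.sum_congr rfl fun x _ => ?_
          rw [hdecomp u x]
      _ = ∑ x, ∑ j, (u ⬝ᵥ v j) * (u x * v j x) := by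
          refine Finset.sum_congr rfl fun x _ => ?_
          rw [Finset.mul_sum]
          exact Finset.sum_congr rfl fun j _ => by ring
      _ = ∑ j, ∑ x, (u ⬝ᵥ v j) * (u x * v j x) := Finset.sum_comm
      _ = ∑ j, (u ⬝ᵥ v j) ^ 2 := by
          refine Finset.sum_congr rfl fun j _ => ?_
          rw [← Finset.mul_sum, show ∑ x, u x * v j x = u ⬝ᵥ v j from rfl]
          ring
  -- the simplified objective
  have hfS : ∀ u : Fin m → ℝ,
      f u = (1/2) * ∑ i ∈ univ.filter (fun i : Fin m => ¬ (i:ℕ) < k),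
        lam i * (u ⬝ᵥ v i) ^ 2 := by
    intro u
    rw [hf u, hCu u]
    rw [← Finset.sum_filter_add_sum_filter_not univ (fun i : Fin m => (i:ℕ) < k)
      (fun i => lam i * (u ⬝ᵥ v i) ^ 2)]
    have hc : ∀ i ∈ univ.filter (fun i : Fin m => (i:ℕ) < k),
        (u ⬝ᵥ C.mulVec (v i)) ^ 2 / (2 * lam i) = (1/2) * (lam i * (u ⬝ᵥ v i) ^ 2) := by
      intro i hi
      have hli : lam i ≠ 0 := ne_of_gt (hpos i (by simpa using (Finset.mem_filter.mp hi).2))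
      rw [hCv u i]
      field_simp
    rw [Finset.sum_congr rfl hc, ← Finset.mul_sum]
    ring
  have hkkS : kk ∈ univ.filter (fun i : Fin m => ¬ (i:ℕ) < k) := by
    simp [hkkdef]
  -- upper bound
  have hub : ∀ u : Fin m → ℝ, u ⬝ᵥ u = 1 → f u ≤ lam kk / 2 := by
    intro u hu1
    rw [hfS u]
    have h1 : ∑ i ∈ univ.filter (fun i : Fin m => ¬ (i:ℕ) < k), lam i * (u ⬝ᵥ v i) ^ 2
        ≤ ∑ i ∈ univ.filter (fun i : Fin m => ¬ (i:ℕ) < k), lam kk * (u ⬝ᵥ v i) ^ 2 := by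
      refine Finset.sum_le_sum fun i hi => ?_
      have hki : kk ≤ i := by
        have := (Finset.mem_filter.mp hi).2
        simp only [not_lt] at this
        exact this
      exact mul_le_mul_of_nonneg_right (hdec kk i hki) (sq_nonneg _)
    have h3 : ∑ i ∈ univ.filter (fun i : Fin m => ¬ (i:ℕ) < k), (u ⬝ᵥ v i) ^ 2
        ≤ ∑ i, (u ⬝ᵥ v i) ^ 2 :=
      Finset.sum_le_sum_of_subset_of_nonneg (Finset.filter_subset _ _)
        (fun i _ _ => sq_nonneg _)
    have h4 : ∑ i, (u ⬝ᵥ v i) ^ 2 = 1 := by rw [← huu u, hu1]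
    have h2 : ∑ i ∈ univ.filter (fun i : Fin m => ¬ (i:ℕ) < k), lam kk * (u ⬝ᵥ v i) ^ 2
        = lam kk * ∑ i ∈ univ.filter (fun i : Fin m => ¬ (i:ℕ) < k), (u ⬝ᵥ v i) ^ 2 :=
      (Finset.mul_sum _ _ _).symm
    nlinarith [hposk]
  -- value at ± v kk
  have hfvk : f (v kk) = lam kk / 2 := by
    rw [hfS]
    have : ∑ i ∈ univ.filter (fun i : Fin m => ¬ (i:ℕ) < k), lam i * (v kk ⬝ᵥ v i) ^ 2
        = lam kk := by
      rw [Finset.sum_eq_single kk]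
      · rw [horth kk kk]; simp
      · intro i _ hne
        rw [horth kk i, if_neg (fun h => hne h.symm)]
        ring
      · intro h; exact absurd hkkS h
    rw [this]; ring
  have hfneg : ∀ u : Fin m → ℝ, f (-u) = f u := by
    intro u
    rw [hfS, hfS]
    simp [neg_dotProduct]
  have hvkk1 : v kk ⬝ᵥ v kk = 1 := by rw [horth kk kk]; simp
  have hvkk1' : (-v kk) ⬝ᵥ (-v kk) = 1 := by
    rw [neg_dotProduct, dotProduct_neg, hvkk1]; ring
  constructor
  · -- maximizer → w = ± v kk
    intro hmax
    have h1 : lam kk / 2 ≤ f w := by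
      have := hmax (v kk) hvkk1
      rwa [hfvk] at this
    have h2 : f w = lam kk / 2 := le_antisymm (hub w hw) h1
    have hsum1 : ∑ j, (w ⬝ᵥ v j) ^ 2 = 1 := by rw [← huu w, hw]
    have hS : ∑ i ∈ univ.filter (fun i : Fin m => ¬ (i:ℕ) < k),
        lam i * (w ⬝ᵥ v i) ^ 2 = lam kk := by
      rw [hfS w] at h2
      linarith
    set t : Fin m → ℝ := fun i =>
      if (i:ℕ) < k then lam kk * (w ⬝ᵥ v i) ^ 2 else (lam kk - lam i) * (w ⬝ᵥ v i) ^ 2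
      with htdef
    have hts : ∑ i, t i = 0 := by
      have e0 : ∑ i, t i
          = ∑ i ∈ univ.filter (fun i : Fin m => (i:ℕ) < k), t i
          + ∑ i ∈ univ.filter (fun i : Fin m => ¬ (i:ℕ) < k), t i :=
        (Finset.sum_filter_add_sum_filter_not univ _ t).symm
      have e1 : ∑ i ∈ univ.filter (fun i : Fin m => (i:ℕ) < k), t i
          = lam kk * ∑ i ∈ univ.filter (fun i : Fin m => (i:ℕ) < k), (w ⬝ᵥ v i) ^ 2 := by
        rw [Finset.mul_sum]
        refine Finset.sum_congr rfl fun i hi => ?_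
        rw [htdef]
        simp only []
        rw [if_pos (by simpa using (Finset.mem_filter.mp hi).2)]
      have e2 : ∑ i ∈ univ.filter (fun i : Fin m => ¬ (i:ℕ) < k), t i
          = lam kk * (∑ i ∈ univ.filter (fun i : Fin m => ¬ (i:ℕ) < k), (w ⬝ᵥ v i) ^ 2)
          - ∑ i ∈ univ.filter (fun i : Fin m => ¬ (i:ℕ) < k), lam i * (w ⬝ᵥ v i) ^ 2 := by
        rw [Finset.mul_sum, ← Finset.sum_sub_distrib]
        refine Finset.sum_congr rfl fun i hi => ?_
        rw [htdef]
        simp only []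
        rw [if_neg (by simpa using (Finset.mem_filter.mp hi).2)]
        ring
      have e3 : ∑ i ∈ univ.filter (fun i : Fin m => (i:ℕ) < k), (w ⬝ᵥ v i) ^ 2
          + ∑ i ∈ univ.filter (fun i : Fin m => ¬ (i:ℕ) < k), (w ⬝ᵥ v i) ^ 2 = 1 := by
        rw [Finset.sum_filter_add_sum_filter_not]
        exact hsum1
      rw [e0, e1, e2]
      nlinarith [hS]
    have htnn : ∀ i ∈ (univ : Finset (Fin m)), 0 ≤ t i := by
      intro i _
      rw [htdef]
      simp only []
      split_ifs with h
      · exact mul_nonneg hposk.le (sq_nonneg _)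
      · refine mul_nonneg ?_ (sq_nonneg _)
        have hki : kk ≤ i := by
          simp only [not_lt] at h
          exact h
        linarith [hdec kk i hki]
    have htz := (Finset.sum_eq_zero_iff_of_nonneg htnn).mp hts
    have haz : ∀ i : Fin m, i ≠ kk → w ⬝ᵥ v i = 0 := by
      intro i hne
      have hti := htz i (Finset.mem_univ i)
      rw [htdef] at hti
      simp only [] at hti
      by_cases hik : (i:ℕ) < k
      · rw [if_pos hik] at hti
        have := (mul_eq_zero.mp hti).resolve_left (ne_of_gt hposk)
        exact pow_eq_zero_iff (n := 2) (by norm_num) |>.mp this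
      · rw [if_neg hik] at hti
        have hik' : k + 1 ≤ (i:ℕ) := by
          have h1 : k ≤ (i:ℕ) := Nat.le_of_not_lt hik
          rcases Nat.lt_or_ge k (i:ℕ) with h | h
          · omega
          · exfalso
            refine hne (Fin.ext ?_)
            show (i : ℕ) = k
            omega
        have hlt : lam i < lam kk := hgap i hik'
        have := (mul_eq_zero.mp hti).resolve_left (by linarith)
        exact pow_eq_zero_iff (n := 2) (by norm_num) |>.mp this
    have hak : (w ⬝ᵥ v kk) ^ 2 = 1 := by
      have : ∑ j, (w ⬝ᵥ v j) ^ 2 = (w ⬝ᵥ v kk) ^ 2 := by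
        refine Finset.sum_eq_single kk (fun j _ hj => by rw [haz j hj]; ring)
          (fun h => absurd (Finset.mem_univ kk) h)
      linarith [hsum1]
    have hweq : w = fun x => (w ⬝ᵥ v kk) * v kk x := by
      funext x
      rw [← hdecomp w x]
      exact Finset.sum_eq_single kk (fun j _ hj => by rw [haz j hj]; ring)
        (fun h => absurd (Finset.mem_univ kk) h)
    have hcase : w ⬝ᵥ v kk = 1 ∨ w ⬝ᵥ v kk = -1 := by
      rw [sq] at hak
      exact mul_self_eq_one_iff.mp hak
    rcases hcase with h | h
    · left
      rw [hweq, h]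
      funext x
      simp
    · right
      rw [hweq, h]
      funext x
      simp
  · -- w = ± v kk → maximizer
    intro h u hu1
    have hfw : f w = lam kk / 2 := by
      rcases h with h | h
      · rw [h]; exact hfvk
      · rw [h]; rw [show -v kk = -(v kk) from rfl, hfneg, hfvk]
    rw [hfw]
    exact hub u hu1
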